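/- For any symmetric positive definite matrices Q₁, Q₂ ∈ ℝ^{n×n}, centers q₁, q₂ ∈ ℝ^n, and any λ ∈ (0,1), the Minkowski sum of the ellipsoids E(q₁,Q₁) and E(q₂,Q₂) is contained in the ellipsoid E(q₁+q₂, Q₁/λ + Q₂/(1−λ)). -/

import Mathlib

open Matrix Set Pointwise
attribute [local instance] Matrix.linftyOpNormedAddCommGroup Matrix.linftyOpNormedSpace
  Matrix.linftyOpNormedRing Matrix.linftyOpNormedAlgebra

/-- Matrix exponential over ℝ. -/
noncomputable def mexp {n : ℕ} (A : Matrix (Fin n) (Fin n) ℝ) : Matrix (Fin n) (Fin n) ℝ :=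
  NormedSpace.exp A

/-- Square root of a positive semidefinite matrix (as in the older Mathlib). -/
noncomputable def Matrix.PosSemidef.sqrt {m : Type*} [Fintype m] [DecidableEq m]
    {A : Matrix m m ℝ} (hA : A.PosSemidef) : Matrix m m ℝ :=
  hA.1.eigenvectorUnitary.1 * diagonal ((↑) ∘ (Real.sqrt ∘ hA.1.eigenvalues)) *
    (star hA.1.eigenvectorUnitary : Matrix m m ℝ)

lemma Matrix.PosSemidef.posSemidef_sqrt {n : ℕ} {A : Matrix (Fin n) (Fin n) ℝ}
    (hA : A.PosSemidef) : hA.sqrt.PosSemidef := by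
  have hD : (diagonal ((↑) ∘ (Real.sqrt ∘ hA.1.eigenvalues)) :
      Matrix (Fin n) (Fin n) ℝ).PosSemidef :=
    PosSemidef.diagonal (fun i => by simp [Real.sqrt_nonneg])
  have := hD.conjTranspose_mul_mul_same (star (hA.1.eigenvectorUnitary : Matrix (Fin n) (Fin n) ℝ))
  simpa [Matrix.PosSemidef.sqrt, star_eq_conjTranspose] using this

lemma Matrix.PosSemidef.sqrt_mul_self {n : ℕ} {A : Matrix (Fin n) (Fin n) ℝ}
    (hA : A.PosSemidef) : hA.sqrt * hA.sqrt = A := by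
  set U : Matrix (Fin n) (Fin n) ℝ := hA.1.eigenvectorUnitary.1
  have hU : star U * U = 1 := Unitary.coe_star_mul_self _
  have hD : (diagonal ((↑) ∘ (Real.sqrt ∘ hA.1.eigenvalues)) : Matrix (Fin n) (Fin n) ℝ) *
      diagonal ((↑) ∘ (Real.sqrt ∘ hA.1.eigenvalues)) = diagonal ((↑) ∘ hA.1.eigenvalues) := by
    rw [diagonal_mul_diagonal]
    congr 1
    funext i
    simp [Real.mul_self_sqrt (hA.eigenvalues_nonneg i)]
  have hspec := hA.1.spectral_theorem
  rw [Unitary.conjStarAlgAut_apply] at hspec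
  calc hA.sqrt * hA.sqrt
      = U * (diagonal ((↑) ∘ (Real.sqrt ∘ hA.1.eigenvalues)) * (star U * U) *
          diagonal ((↑) ∘ (Real.sqrt ∘ hA.1.eigenvalues))) * star U := by
        simp only [Matrix.PosSemidef.sqrt, U, Matrix.mul_assoc]
    _ = A := by rw [hU, Matrix.mul_one, hD]; exact hspec.symm

/-- The ellipsoid `E(q,Q) = {q + Q^{1/2} v : vᵀv ≤ 1}` for `Q` positive semidefinite. -/
noncomputable def ellipsoid {n : ℕ} (q : Fin n → ℝ) {Q : Matrix (Fin n) (Fin n) ℝ}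
    (hQ : Q.PosSemidef) : Set (Fin n → ℝ) :=
  {x | ∃ v : Fin n → ℝ, v ⬝ᵥ v ≤ 1 ∧ x = q + hQ.sqrt *ᵥ v}

/-- Cauchy–Schwarz for the dot product on `Fin n → ℝ`. -/
lemma dot_le_sqrt_mul_sqrt {n : ℕ} (x y : Fin n → ℝ) :
    x ⬝ᵥ y ≤ Real.sqrt (x ⬝ᵥ x) * Real.sqrt (y ⬝ᵥ y) := by
  have h := Finset.sum_mul_sq_le_sq_mul_sq Finset.univ x y
  have hx : x ⬝ᵥ x = ∑ i, x i ^ 2 := by simp [dotProduct, sq]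
  have hy : y ⬝ᵥ y = ∑ i, y i ^ 2 := by simp [dotProduct, sq]
  have hxy : (x ⬝ᵥ y) ^ 2 ≤ (x ⬝ᵥ x) * (y ⬝ᵥ y) := by rw [hx, hy]; exact h
  calc x ⬝ᵥ y ≤ |x ⬝ᵥ y| := le_abs_self _
    _ = Real.sqrt ((x ⬝ᵥ y) ^ 2) := (Real.sqrt_sq_eq_abs _).symm
    _ ≤ Real.sqrt ((x ⬝ᵥ x) * (y ⬝ᵥ y)) := Real.sqrt_le_sqrt hxy
    _ = Real.sqrt (x ⬝ᵥ x) * Real.sqrt (y ⬝ᵥ y) := Real.sqrt_mul (by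
        rw [hx]; positivity) _

lemma posDef_smul {n : ℕ} {Q : Matrix (Fin n) (Fin n) ℝ} (hQ : Q.PosDef) {c : ℝ}
    (hc : 0 < c) : (c • Q).PosDef := by
  refine posDef_iff_dotProduct_mulVec.mpr ⟨?_, fun x hx => ?_⟩
  · unfold Matrix.IsHermitian
    rw [conjTranspose_smul, hQ.1]
    simp
  · rw [smul_mulVec, dotProduct_smul, smul_eq_mul]
    exact mul_pos hc (hQ.dotProduct_mulVec_pos hx)

lemma herm_dot_swap {n : ℕ} {M : Matrix (Fin n) (Fin n) ℝ} (hM : M.IsHermitian)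
    (x y : Fin n → ℝ) : x ⬝ᵥ (M *ᵥ y) = (M *ᵥ x) ⬝ᵥ y := by
  have hMt : Mᵀ = M := by
    have := hM; rwa [Matrix.IsHermitian, conjTranspose_eq_transpose_of_trivial] at this
  rw [dotProduct_mulVec, ← Matrix.mulVec_transpose, hMt]

/-- `E(q₁,Q₁) ⊕ E(q₂,Q₂) ⊆ E(q₁+q₂, Q₁/λ + Q₂/(1−λ))` for `λ ∈ (0,1)`. -/
theorem minkowski_sum_ellipsoid_subset {n : ℕ} (Q₁ Q₂ : Matrix (Fin n) (Fin n) ℝ)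
    (h1 : Q₁.PosDef) (h2 : Q₂.PosDef) (q₁ q₂ : Fin n → ℝ)
    (lam : ℝ) (hlam : lam ∈ Set.Ioo (0:ℝ) 1)
    (hS : (lam⁻¹ • Q₁ + (1 - lam)⁻¹ • Q₂).PosSemidef) :
    ellipsoid q₁ h1.posSemidef + ellipsoid q₂ h2.posSemidef ⊆ ellipsoid (q₁ + q₂) hS := by
  obtain ⟨hl, hl1⟩ := hlam
  have hl' : (0:ℝ) < 1 - lam := by linarith
  set S := lam⁻¹ • Q₁ + (1 - lam)⁻¹ • Q₂ with hSdef
  have hSpd : S.PosDef :=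
    (posDef_smul h1 (inv_pos.mpr hl)).add (posDef_smul h2 (inv_pos.mpr hl'))
  set R := hS.sqrt with hRdef
  have hRps : R.PosSemidef := hS.posSemidef_sqrt
  have hRR : R * R = S := hS.sqrt_mul_self
  -- R is invertible
  have hdet : IsUnit R.det := by
    have : R.det * R.det = S.det := by rw [← det_mul, hRR]
    have hSdet : 0 < S.det := hSpd.det_pos
    have : R.det ≠ 0 := by
      intro h; rw [h, mul_zero] at this; exact hSdet.ne' this.symm
    exact this.isUnit
  have hRRinv : R * R⁻¹ = 1 := Matrix.mul_nonsing_inv R hdet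
  set B₁ := h1.posSemidef.sqrt with hB₁def
  set B₂ := h2.posSemidef.sqrt with hB₂def
  rintro x hx
  rw [Set.mem_add] at hx
  obtain ⟨a, ha, b, hb, rfl⟩ := hx
  obtain ⟨v₁, hv₁, rfl⟩ := ha
  obtain ⟨v₂, hv₂, rfl⟩ := hb
  set c := B₁ *ᵥ v₁ + B₂ *ᵥ v₂ with hcdef
  set w := R⁻¹ *ᵥ c with hwdef
  set u := R⁻¹ *ᵥ w with hudef
  have hRw : R *ᵥ w = c := by
    rw [hwdef, Matrix.mulVec_mulVec, hRRinv, Matrix.one_mulVec]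
  have hRu : R *ᵥ u = w := by
    rw [hudef, Matrix.mulVec_mulVec, hRRinv, Matrix.one_mulVec]
  set t := w ⬝ᵥ w with htdef
  have ht0 : 0 ≤ t := by
    rw [htdef]
    exact Finset.sum_nonneg fun i _ => mul_self_nonneg _
  -- t = u ⬝ᵥ c
  have htc : t = u ⬝ᵥ c := by
    rw [← hRw, herm_dot_swap hRps.1, hRu]
  -- dot bounds with quadratic forms
  set α := u ⬝ᵥ (Q₁ *ᵥ u) with hαdef
  set β := u ⬝ᵥ (Q₂ *ᵥ u) with hβdef
  have hα0 : 0 ≤ α := by simpa using h1.posSemidef.dotProduct_mulVec_nonneg u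
  have hβ0 : 0 ≤ β := by simpa using h2.posSemidef.dotProduct_mulVec_nonneg u
  have hBQ : ∀ (Q : Matrix (Fin n) (Fin n) ℝ) (hQ : Q.PosSemidef),
      (hQ.sqrt *ᵥ u) ⬝ᵥ (hQ.sqrt *ᵥ u) = u ⬝ᵥ (Q *ᵥ u) := by
    intro Q hQ
    rw [← herm_dot_swap hQ.posSemidef_sqrt.1, Matrix.mulVec_mulVec, hQ.sqrt_mul_self]
  have hdot : ∀ (Q : Matrix (Fin n) (Fin n) ℝ) (hQ : Q.PosSemidef) (v : Fin n → ℝ),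
      v ⬝ᵥ v ≤ 1 → u ⬝ᵥ (hQ.sqrt *ᵥ v) ≤ Real.sqrt (u ⬝ᵥ (Q *ᵥ u)) := by
    intro Q hQ v hv
    calc u ⬝ᵥ (hQ.sqrt *ᵥ v) = (hQ.sqrt *ᵥ u) ⬝ᵥ v := herm_dot_swap hQ.posSemidef_sqrt.1 u v
      _ ≤ Real.sqrt ((hQ.sqrt *ᵥ u) ⬝ᵥ (hQ.sqrt *ᵥ u)) * Real.sqrt (v ⬝ᵥ v) :=
          dot_le_sqrt_mul_sqrt _ _
      _ ≤ Real.sqrt ((hQ.sqrt *ᵥ u) ⬝ᵥ (hQ.sqrt *ᵥ u)) * 1 :=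
          mul_le_mul_of_nonneg_left (Real.sqrt_le_one.mpr hv) (Real.sqrt_nonneg _)
      _ = Real.sqrt (u ⬝ᵥ (Q *ᵥ u)) := by rw [mul_one, hBQ Q hQ]
  -- u ⬝ᵥ S u = t
  have hSu : u ⬝ᵥ (S *ᵥ u) = t := by
    rw [← hRR, ← Matrix.mulVec_mulVec, herm_dot_swap hRps.1, hRu, htdef]
  have hSexp : u ⬝ᵥ (S *ᵥ u) = lam⁻¹ * α + (1 - lam)⁻¹ * β := by
    rw [hSdef, Matrix.add_mulVec, dotProduct_add, smul_mulVec, smul_mulVec,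
      dotProduct_smul, dotProduct_smul, smul_eq_mul, smul_eq_mul]
  -- scalar inequality
  have hkey : Real.sqrt α + Real.sqrt β ≤ Real.sqrt (lam⁻¹ * α + (1 - lam)⁻¹ * β) := by
    set s := Real.sqrt α
    set r := Real.sqrt β
    have hs0 : 0 ≤ s := Real.sqrt_nonneg _
    have hr0 : 0 ≤ r := Real.sqrt_nonneg _
    have hs2 : s ^ 2 = α := Real.sq_sqrt hα0
    have hr2 : r ^ 2 = β := Real.sq_sqrt hβ0
    have hineq : (s + r) ^ 2 ≤ lam⁻¹ * α + (1 - lam)⁻¹ * β := by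
      rw [← hs2, ← hr2]
      have key : lam * (1 - lam) * ((s + r) ^ 2) ≤ (1 - lam) * s ^ 2 + lam * r ^ 2 := by
        nlinarith [sq_nonneg ((1 - lam) * s - lam * r)]
      have hprod : 0 < lam * (1 - lam) := mul_pos hl hl'
      have heq : lam⁻¹ * s ^ 2 + (1 - lam)⁻¹ * r ^ 2
          = ((1 - lam) * s ^ 2 + lam * r ^ 2) / (lam * (1 - lam)) := by
        field_simp
      rw [heq, le_div_iff₀ hprod]
      linarith [key]
    calc s + r = Real.sqrt ((s + r) ^ 2) := (Real.sqrt_sq (by positivity)).symm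
      _ ≤ _ := Real.sqrt_le_sqrt hineq
  -- combine: t ≤ sqrt t
  have hts : t ≤ Real.sqrt t := by
    calc t = u ⬝ᵥ c := htc
      _ = u ⬝ᵥ (B₁ *ᵥ v₁) + u ⬝ᵥ (B₂ *ᵥ v₂) := by rw [hcdef, dotProduct_add]
      _ ≤ Real.sqrt α + Real.sqrt β := add_le_add
          (hdot Q₁ h1.posSemidef v₁ hv₁) (hdot Q₂ h2.posSemidef v₂ hv₂)
      _ ≤ Real.sqrt (lam⁻¹ * α + (1 - lam)⁻¹ * β) := hkey
      _ = Real.sqrt t := by rw [← hSexp, hSu]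
  have ht1 : t ≤ 1 := by
    nlinarith [Real.sq_sqrt ht0, Real.sqrt_nonneg t]
  exact ⟨w, ht1, by rw [hRw]; module⟩
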